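/- Let τ ∈ (0,1) and let σ be a stake vector. If player i belongs to every minimum-size coalition C witnessing d(σ) = k and some player ℓ ∉ C has σ_ℓ ≥ (1−τ)·σ_i, then there exists a size-k coalition avoiding i with total stake exceeding τ·Σ_{j≠i} σ_j; equivalently, d(σ_{-i}) ≤ k. -/

import Mathlib

open Finset

/-- Nakamoto coefficient of the stake profile `σ` restricted to the player set `N`,
with threshold `τ`: the minimum size of a coalition `C ⊆ N` whose total stake strictly
exceeds `τ` times the total stake of `N`. -/
noncomputable def nakamoto {n : ℕ} (σ : Fin n → ℝ) (N : Finset (Fin n)) (τ : ℝ) : ℕ :=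
  sInf {k : ℕ | ∃ C ⊆ N, C.card = k ∧ τ * ∑ j ∈ N, σ j < ∑ j ∈ C, σ j}

theorem stmt14 {n : ℕ} (τ : ℝ) (hτ0 : 0 < τ) (hτ1 : τ < 1)
    (σ : Fin n → ℝ) (hσ : ∀ i, 0 ≤ σ i) (k : ℕ)
    (C : Finset (Fin n)) (hC : C.card = k)
    (hwit : τ * ∑ j, σ j < ∑ j ∈ C, σ j)
    (i : Fin n) (hiC : i ∈ C)
    (ℓ : Fin n) (hℓC : ℓ ∉ C) (hℓ : σ ℓ ≥ (1 - τ) * σ i) :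
    (∃ C' : Finset (Fin n), C' ⊆ Finset.univ.erase i ∧ C'.card = k ∧
        τ * ∑ j ∈ Finset.univ.erase i, σ j < ∑ j ∈ C', σ j) ∧
    nakamoto σ (Finset.univ.erase i) τ ≤ k := by
  have hiℓ : ℓ ≠ i := fun h => hℓC (h ▸ hiC)
  have hℓE : ℓ ∉ C.erase i := fun h => hℓC (mem_of_mem_erase h)
  set C' : Finset (Fin n) := insert ℓ (C.erase i) with hC'
  have hsub : C' ⊆ Finset.univ.erase i := by
    intro x hx
    rcases mem_insert.mp hx with h | h
    · exact mem_erase.mpr ⟨h ▸ hiℓ, mem_univ _⟩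
    · exact mem_erase.mpr ⟨(mem_erase.mp h).1, mem_univ _⟩
  have hcard : C'.card = k := by
    rw [hC', card_insert_of_notMem hℓE, card_erase_of_mem hiC, hC]
    have : 1 ≤ k := hC ▸ card_pos.mpr ⟨i, hiC⟩
    omega
  have hsumC : ∑ j ∈ C.erase i, σ j = ∑ j ∈ C, σ j - σ i := by
    rw [Finset.sum_erase_eq_sub hiC]
  have hsumC' : ∑ j ∈ C', σ j = ∑ j ∈ C, σ j - σ i + σ ℓ := by
    rw [hC', Finset.sum_insert hℓE, hsumC]; ring
  have hsumU : ∑ j ∈ Finset.univ.erase i, σ j = (∑ j, σ j) - σ i := by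
    rw [Finset.sum_erase_eq_sub (mem_univ i)]
  have hkey : τ * ∑ j ∈ Finset.univ.erase i, σ j < ∑ j ∈ C', σ j := by
    rw [hsumU, hsumC']
    nlinarith [hσ i]
  refine ⟨⟨C', hsub, hcard, hkey⟩, Nat.sInf_le ⟨C', hsub, hcard, hkey⟩⟩
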